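/- arXiv:1906.11093 — 6 statements merged into one kernel-verified Lean document; each statement's English description precedes it below -/
import Mathlib

section
/- No natural number m with m ≡ 1 (mod 4) or m ≡ 2 (mod 4) admits a t-squared partition for any t ≥ 1. -/
/-- No natural number congruent to 1 or 2 mod 4 admits a t-squared partition. -/
theorem stmt6 (m : ℕ) (hm : m % 4 = 1 ∨ m % 4 = 2) :
    ¬ ∃ (t : ℕ) (_ : 1 ≤ t) (c : Fin t → ℕ),
        (∀ i, 0 < c i) ∧ m = (∑ i, c i) ^ 2 + 2 * ∑ i, (c i) ^ 2 := by
  rintro ⟨t, ht, c, hpos, rfl⟩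
  set S := ∑ i, c i with hS
  set Q := ∑ i, (c i) ^ 2 with hQ
  have hpar : Q % 2 = S % 2 := by
    have : (Q : ZMod 2) = (S : ZMod 2) := by
      push_cast [hS, hQ]
      exact Finset.sum_congr rfl fun i _ => ZMod.pow_card _
    have := congrArg ZMod.val this
    simpa [ZMod.val_natCast] using this
  rcases Nat.even_or_odd S with ⟨k, hk⟩ | ⟨k, hk⟩
  · have hQ2 : Q % 2 = 0 := by omega
    obtain ⟨q, hq⟩ := Nat.dvd_of_mod_eq_zero hQ2
    have hsq : S ^ 2 = 4 * (k * k) := by rw [hk]; ring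
    omega
  · have hQ2 : Q % 2 = 1 := by omega
    have hq : Q = 2 * (Q / 2) + 1 := by omega
    have hsq : S ^ 2 = 4 * (k * k + k) + 1 := by rw [hk]; ring
    omega
end

section
/- The number of partitions of n into at least two parts equals the number of two-line matrices (c_1,...,c_s; 0, d_2,...,d_s) of nonnegative integers with d_1 = 0, c_s = 0, d_s ≠ 0, c_j = c_{j+1} + d_{j+1} for 1 ≤ j ≤ s-1, and total entry sum at most n. -/
/-- A two-line matrix of class M, encoded as a list of columns (cᵢ, dᵢ):
nonempty, last column is (0, d) with d ≠ 0, and cⱼ = cⱼ₊₁ + dⱼ₊₁. -/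
def IsMatM (l : List (ℕ × ℕ)) : Prop :=
  l ≠ [] ∧ (∃ d, d ≠ 0 ∧ l.getLast? = some (0, d)) ∧
    List.Chain' (fun p q => p.1 = q.1 + q.2) l

/-- The sum of all entries of the two-line matrix. -/
def entriesSum (l : List (ℕ × ℕ)) : ℕ := (l.map fun p => p.1 + p.2).sum

namespace Stmt10Aux

/-- Build the matrix columns from the list of second-row entries. -/
def cols : List ℕ → List (ℕ × ℕ)
  | [] => []
  | d :: t => (t.sum, d) :: cols t

/-- suffix sums (inclusive) -/
def pp : List ℕ → List ℕ
  | [] => []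
  | x :: t => (x + t.sum) :: pp t

/-- successive differences, keeping the last element -/
def dd : List ℕ → List ℕ
  | [] => []
  | [x] => [x]
  | x :: y :: t => (x - y) :: dd (y :: t)

lemma cols_map_snd (D : List ℕ) : (cols D).map Prod.snd = D := by
  induction D with
  | nil => rfl
  | cons d t ih => simp [cols, ih]

lemma entriesSum_cols (D : List ℕ) : entriesSum (cols D) = (pp D).sum := by
  induction D with
  | nil => rfl
  | cons d t ih =>
    simp only [cols, pp, entriesSum, List.map_cons, List.sum_cons] at *
    omega

lemma getLast?_cols (D : List ℕ) :
    (cols D).getLast? = D.getLast?.map (fun d => (0, d)) := by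
  induction D with
  | nil => rfl
  | cons d t ih =>
    cases t with
    | nil => simp [cols]
    | cons e t' =>
      rw [cols, show cols (e :: t') = (t'.sum, e) :: cols t' from rfl,
        List.getLast?_cons_cons]
      exact ih

lemma chain'_cols (D : List ℕ) :
    List.Chain' (fun p q : ℕ × ℕ => p.1 = q.1 + q.2) (cols D) := by
  induction D with
  | nil => simp [cols, List.Chain']
  | cons d t ih =>
    cases t with
    | nil => simp [cols, List.Chain']
    | cons e t' =>
      rw [cols, show cols (e :: t') = (t'.sum, e) :: cols t' from rfl] at *
      exact List.IsChain.cons_cons (by simp [add_comm]) ih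

lemma eq_cols_of_isMatM : ∀ {l : List (ℕ × ℕ)}, IsMatM l → l = cols (l.map Prod.snd) := by
  intro l
  induction l with
  | nil => intro h; exact absurd rfl h.1
  | cons p t ih =>
    rintro ⟨-, ⟨d, hd, hlast⟩, hchain⟩
    cases t with
    | nil =>
      simp only [List.getLast?_singleton, Option.some_inj] at hlast
      simp [cols, hlast]
    | cons q t' =>
      have ht : (q :: t') = cols ((q :: t').map Prod.snd) := by
        refine ih ⟨by simp, ⟨d, hd, ?_⟩, hchain.tail⟩
        · rw [← hlast, List.getLast?_cons_cons]
      have hq1 : q.1 = (t'.map Prod.snd).sum := by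
        have := congrArg List.head? ht
        simp only [cols, List.map_cons, List.head?_cons, Option.some_inj] at this
        exact congrArg Prod.fst this
      have hp1 : p.1 = q.1 + q.2 := (List.isChain_cons_cons.1 hchain).1
      have : p = (((q :: t').map Prod.snd).sum, p.2) := by
        ext
        · simp [hp1, hq1, add_comm]
        · rfl
      calc p :: q :: t' = (((q :: t').map Prod.snd).sum, p.2) :: cols ((q :: t').map Prod.snd) := by
            rw [← this, ← ht]
        _ = cols ((p :: q :: t').map Prod.snd) := by simp [cols]

lemma pp_length (q : List ℕ) : (pp q).length = q.length := by
  induction q with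
  | nil => rfl
  | cons x t ih => simp [pp, ih]

lemma pp_headD (q : List ℕ) : (pp q).headD 0 = q.sum := by
  cases q with
  | nil => rfl
  | cons x t => simp [pp]

lemma mem_pp_le {q : List ℕ} : ∀ b ∈ pp q, b ≤ q.sum := by
  induction q with
  | nil => simp [pp]
  | cons x t ih =>
    intro b hb
    rcases List.mem_cons.1 hb with h | h
    · simp only [List.sum_cons]; omega
    · have := ih b h
      simp only [List.sum_cons]
      omega

lemma pp_sorted (q : List ℕ) : (pp q).Pairwise (· ≥ ·) := by
  induction q with
  | nil => simp [pp]
  | cons x t ih =>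
    rw [pp, List.pairwise_cons]
    exact ⟨fun b hb => le_add_of_le_right (mem_pp_le b hb), ih⟩

lemma pp_pos : ∀ {q : List ℕ}, q.getLast? ≠ some 0 → ∀ b ∈ pp q, 0 < b := by
  intro q
  induction q with
  | nil => simp [pp]
  | cons x t ih =>
    intro hlast b hb
    cases t with
    | nil =>
      simp only [List.getLast?_singleton, ne_eq, Option.some_inj] at hlast
      simp only [pp, List.sum_nil, List.mem_cons, List.not_mem_nil, or_false] at hb
      omega
    | cons y t' =>
      rw [List.getLast?_cons_cons] at hlast
      rcases List.mem_cons.1 hb with h | h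
      · have h2 : 0 < (y + t'.sum) := ih hlast _ (by simp [pp])
        simp only [List.sum_cons] at h
        omega
      · exact ih hlast b h

lemma pp_dd : ∀ {M : List ℕ}, M.Pairwise (· ≥ ·) → pp (dd M) = M := by
  intro M
  induction M with
  | nil => intro _; rfl
  | cons x t ih =>
    intro hs
    cases t with
    | nil => simp [dd, pp]
    | cons y t' =>
      have hs' : (y :: t').Pairwise (· ≥ ·) := (List.pairwise_cons.1 hs).2
      have hxy : y ≤ x := (List.pairwise_cons.1 hs).1 y (by simp)
      have ih' := ih hs'
      have hsum : (dd (y :: t')).sum = y := by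
        have := pp_headD (dd (y :: t'))
        rw [ih'] at this
        simpa using this.symm
      rw [dd, pp, hsum, ih']
      congr 1
      omega

lemma dd_pp : ∀ (q : List ℕ), dd (pp q) = q := by
  intro q
  induction q with
  | nil => rfl
  | cons x t ih =>
    cases t with
    | nil => simp [pp, dd]
    | cons y t' =>
      rw [show pp (x :: y :: t') =
        (x + (y + t'.sum)) :: (y + t'.sum) :: pp t' from by simp [pp], dd]
      rw [show (y + t'.sum) :: pp t' = pp (y :: t') from rfl, ih]
      congr 1
      omega

lemma dd_ne_nil {M : List ℕ} (h : M ≠ []) : dd M ≠ [] := by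
  cases M with
  | nil => exact absurd rfl h
  | cons x t => cases t <;> simp [dd]

lemma dd_length : ∀ (M : List ℕ), (dd M).length = M.length := by
  intro M
  induction M with
  | nil => rfl
  | cons x t ih =>
    cases t with
    | nil => rfl
    | cons y t' => simpa [dd] using ih

lemma dd_getLast? : ∀ (M : List ℕ), (dd M).getLast? = M.getLast? := by
  intro M
  induction M with
  | nil => rfl
  | cons x t ih =>
    cases t with
    | nil => rfl
    | cons y t' =>
      obtain ⟨z, r, hz⟩ := List.exists_cons_of_ne_nil
        (dd_ne_nil (show (y :: t') ≠ [] by simp))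
      rw [dd, hz, List.getLast?_cons_cons, ← hz, ih, List.getLast?_cons_cons]

/-- Key facts about the matrix built from a sorted-descending list. -/
lemma key (M : List ℕ) (hs : M.Pairwise (· ≥ ·)) (hlen : 2 ≤ M.length)
    (hpos : ∀ x ∈ M, 0 < x) :
    IsMatM (cols (0 :: (dd M).tail)) ∧
    (∃ c, (cols (0 :: (dd M).tail)).head? = some (c, 0)) ∧
    entriesSum (cols (0 :: (dd M).tail)) + (dd M).headD 0 = M.sum := by
  have hMne : M ≠ [] := by rintro rfl; simp at hlen
  obtain ⟨h, r, hdd⟩ := List.exists_cons_of_ne_nil (dd_ne_nil hMne)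
  have hrne : r ≠ [] := by
    have := dd_length M
    rw [hdd] at this
    rintro rfl
    simp at this
    omega
  obtain ⟨z, r', hr⟩ := List.exists_cons_of_ne_nil hrne
  have hlastM : M.getLast? = some (M.getLast hMne) :=
    List.getLast?_eq_getLast_of_ne_nil hMne
  have hlast_pos : 0 < M.getLast hMne := hpos _ (List.getLast_mem hMne)
  have hrM : r.getLast? = M.getLast? := by
    rw [← dd_getLast? M, hdd, hr, List.getLast?_cons_cons]
  have hlast01 : (0 :: r).getLast? = some (M.getLast hMne) := by
    rw [hr, List.getLast?_cons_cons, ← hr, hrM, hlastM]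
  rw [hdd]
  simp only [List.tail_cons]
  refine ⟨⟨by simp [cols], ⟨M.getLast hMne, by omega, ?_⟩, chain'_cols _⟩, ⟨r.sum, rfl⟩, ?_⟩
  · rw [getLast?_cols, hlast01]
    rfl
  · have hppM : pp (dd M) = M := pp_dd hs
    rw [hdd] at hppM
    have : M.sum = (pp (h :: r)).sum := by rw [hppM]
    rw [entriesSum_cols]
    simp only [pp, List.sum_cons, List.headD_cons] at this ⊢
    omega

/-- decompose a matrix in M with d₁ = 0 -/
lemma matM_decomp {l : List (ℕ × ℕ)} (h1 : IsMatM l) (h2 : ∃ c, l.head? = some (c, 0)) :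
    ∃ c t, l = (c, 0) :: t ∧ t ≠ [] ∧
      (l.tail.map Prod.snd).getLast? = l.getLast?.map Prod.snd := by
  obtain ⟨c, hc⟩ := h2
  obtain ⟨d, hd, hlast⟩ := h1.2.1
  cases l with
  | nil => simp at hc
  | cons p t =>
    simp only [List.head?_cons, Option.some_inj] at hc
    subst hc
    have htne : t ≠ [] := by
      rintro rfl
      simp only [List.getLast?_singleton, Option.some_inj] at hlast
      exact hd (congrArg Prod.snd hlast).symm
    obtain ⟨q, t', rfl⟩ := List.exists_cons_of_ne_nil htne
    exact ⟨c, _, rfl, htne, by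
      rw [List.tail_cons, List.getLast?_map, List.getLast?_cons_cons]⟩

lemma entriesSum_eq {l : List (ℕ × ℕ)} (h1 : IsMatM l) (h2 : ∃ c, l.head? = some (c, 0)) :
    entriesSum l = (pp (0 :: l.tail.map Prod.snd)).sum := by
  obtain ⟨c, t, rfl, -, -⟩ := matM_decomp h1 h2
  have hl := eq_cols_of_isMatM h1
  have hc : c = (t.map Prod.snd).sum := by
    have := congrArg List.head? hl
    simp only [List.map_cons, cols, List.head?_cons, Option.some_inj] at this
    exact congrArg Prod.fst this
  conv_lhs => rw [hl]
  rw [entriesSum_cols]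
  simp [pp, hc]

lemma M_facts (n : ℕ) (p : Nat.Partition n) (hp : 2 ≤ Multiset.card p.parts) :
    ((Multiset.sort p.parts (· ≤ ·)).reverse).Pairwise (· ≥ ·) ∧
    2 ≤ ((Multiset.sort p.parts (· ≤ ·)).reverse).length ∧
    (∀ x ∈ (Multiset.sort p.parts (· ≤ ·)).reverse, 0 < x) ∧
    ((Multiset.sort p.parts (· ≤ ·)).reverse).sum = n ∧
    (((Multiset.sort p.parts (· ≤ ·)).reverse : List ℕ) : Multiset ℕ) = p.parts := by
  have hcoe : (((Multiset.sort p.parts (· ≤ ·)).reverse : List ℕ) : Multiset ℕ) = p.parts := by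
    rw [Multiset.coe_reverse, Multiset.sort_eq]
  refine ⟨List.pairwise_reverse.mpr ?_, ?_, ?_, ?_, hcoe⟩
  · exact Multiset.pairwise_sort p.parts (· ≤ ·)
  · rw [List.length_reverse, Multiset.length_sort]; exact hp
  · intro x hx
    exact p.parts_pos (Multiset.mem_sort (· ≤ ·) |>.1 (List.mem_reverse.1 hx))
  · rw [← Multiset.sum_coe, hcoe, p.parts_sum]

lemma q_getLast {l : List (ℕ × ℕ)} (h1 : IsMatM l) (h2 : ∃ c, l.head? = some (c, 0))
    (e : ℕ) : ∃ d, d ≠ 0 ∧ (e :: l.tail.map Prod.snd).getLast? = some d := by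
  obtain ⟨c, t, hlt, htne, hlastmap⟩ := matM_decomp h1 h2
  obtain ⟨d, hd, hlast⟩ := h1.2.1
  refine ⟨d, hd, ?_⟩
  obtain ⟨q, t', ht⟩ := List.exists_cons_of_ne_nil htne
  have hr : l.tail.map Prod.snd = q.2 :: t'.map Prod.snd := by rw [hlt, ht]; simp
  rw [hr, List.getLast?_cons_cons, ← hr, hlastmap, hlast]
  rfl

end Stmt10Aux

open Stmt10Aux in
/-- The number of partitions of n into at least two parts equals the number of
matrices in M with d₁ = 0 and total entry sum at most n. -/
theorem stmt10 (n : ℕ) :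
    Nat.card {p : Nat.Partition n // 2 ≤ Multiset.card p.parts} =
      Nat.card {l : List (ℕ × ℕ) // IsMatM l ∧
        (∃ c, l.head? = some (c, 0)) ∧ entriesSum l ≤ n} := by
  refine Nat.card_congr ?_
  refine
    { toFun := fun p => ⟨cols (0 :: (dd ((Multiset.sort p.1.parts (· ≤ ·)).reverse)).tail), ?_⟩
      invFun := fun l => ⟨⟨((pp ((n - entriesSum l.1) :: l.1.tail.map Prod.snd) : List ℕ) :
        Multiset ℕ), ?_, ?_⟩, ?_⟩
      left_inv := ?_
      right_inv := ?_ }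
  · -- toFun membership
    obtain ⟨hs, hlen, hpos, hsum, -⟩ := M_facts n p.1 p.2
    obtain ⟨h1, h2, h3⟩ := key _ hs hlen hpos
    exact ⟨h1, h2, by omega⟩
  · -- parts_pos
    intro i hi
    obtain ⟨d, hd, hlast⟩ := q_getLast l.2.1 l.2.2.1 (n - entriesSum l.1)
    exact pp_pos (by rw [hlast]; simpa using hd) i (Multiset.mem_coe.1 hi)
  · -- parts_sum
    obtain ⟨c, t, hlt, htne, -⟩ := matM_decomp l.2.1 l.2.2.1
    have h1 := entriesSum_eq l.2.1 l.2.2.1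
    have h2 := l.2.2.2
    rw [Multiset.sum_coe]
    simp only [pp, List.sum_cons] at h1 ⊢
    omega
  · -- card
    obtain ⟨c, t, hlt, htne, -⟩ := matM_decomp l.2.1 l.2.2.1
    obtain ⟨q, t', ht⟩ := List.exists_cons_of_ne_nil htne
    rw [Multiset.coe_card, pp_length]
    rw [hlt, ht]
    simp
  · -- left_inv
    intro p
    apply Subtype.ext
    apply Nat.Partition.ext
    obtain ⟨hs, hlen, hpos, hsum, hcoe⟩ := M_facts n p.1 p.2
    set M := (Multiset.sort p.1.parts (· ≤ ·)).reverse with hM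
    obtain ⟨h1, h2, h3⟩ := key M hs hlen hpos
    have hMne : M ≠ [] := by rintro h; rw [h] at hlen; simp at hlen
    obtain ⟨h0, r0, hdd⟩ := List.exists_cons_of_ne_nil (dd_ne_nil hMne)
    have e1 : (cols (0 :: (dd M).tail)).tail.map Prod.snd = (dd M).tail := by
      rw [show cols (0 :: (dd M).tail) = ((dd M).tail.sum, 0) :: cols (dd M).tail from rfl,
        List.tail_cons, cols_map_snd]
    have e2 : n - entriesSum (cols (0 :: (dd M).tail)) = h0 := by
      rw [hsum] at h3
      rw [show (dd M).headD 0 = h0 by rw [hdd]; rfl] at h3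
      omega
    show ((pp ((n - entriesSum (cols (0 :: (dd M).tail))) ::
        (cols (0 :: (dd M).tail)).tail.map Prod.snd) : List ℕ) : Multiset ℕ) = p.1.parts
    rw [e1, e2, hdd, List.tail_cons, show h0 :: r0 = dd M from hdd.symm, pp_dd hs, hcoe]
  · -- right_inv
    intro l
    apply Subtype.ext
    obtain ⟨c, t, hlt, htne, -⟩ := matM_decomp l.2.1 l.2.2.1
    set q : List ℕ := (n - entriesSum l.1) :: l.1.tail.map Prod.snd with hq
    have hsorted : ((pp q).reverse).Pairwise (· ≤ ·) := List.pairwise_reverse.mpr (pp_sorted q)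
    have hsort : Multiset.sort ((pp q : List ℕ) : Multiset ℕ) (· ≤ ·) = (pp q).reverse := by
      refine List.Perm.eq_of_pairwise' (Multiset.pairwise_sort _ _) hsorted ?_
      refine Multiset.coe_eq_coe.1 ?_
      rw [Multiset.sort_eq, Multiset.coe_reverse]
    show cols (0 :: (dd ((Multiset.sort
        ((pp q : List ℕ) : Multiset ℕ) (· ≤ ·)).reverse)).tail) = l.1
    rw [hsort, List.reverse_reverse, dd_pp, hq, List.tail_cons]
    have h1 := eq_cols_of_isMatM l.2.1
    have h2 : l.1.map Prod.snd = 0 :: l.1.tail.map Prod.snd := by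
      rw [hlt]; simp
    rw [h2] at h1
    exact h1.symm
end

section
/- Every number m arising from the Path Procedure applied to a matrix associated with a partition of n satisfies m ≤ n^2 - 1; equivalently, if c_1 ≥ ... ≥ c_t ≥ 1 with 2c_1 + c_2 + ... + c_t ≤ n, then (c_1+...+c_t)^2 + 2(c_1^2+...+c_t^2) ≤ n^2 - 1. -/
/-- If c₁ ≥ ⋯ ≥ c_t ≥ 1 and 2c₁ + c₂ + ⋯ + c_t ≤ n, then the Path Procedure
value m = (Σcᵢ)² + 2Σcᵢ² satisfies m ≤ n² - 1. -/
theorem stmt13 (n t : ℕ) (ht : 0 < t) (c : Fin t → ℕ) (hpos : ∀ i, 1 ≤ c i)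
    (hdec : Antitone c) (hn : c ⟨0, ht⟩ + (∑ i, c i) ≤ n) :
    (∑ i, c i) ^ 2 + 2 * ∑ i, (c i) ^ 2 ≤ n ^ 2 - 1 := by
  set c0 := c ⟨0, ht⟩ with hc0
  set S := ∑ i, c i with hS
  have h1 : ∑ i, (c i) ^ 2 ≤ c0 * S := by
    rw [hS, Finset.mul_sum]
    apply Finset.sum_le_sum
    intro i _
    have hle : c i ≤ c0 := hdec (Fin.mk_le_of_le_val (Nat.zero_le _))
    calc c i ^ 2 = c i * c i := sq (c i) ▸ rfl
    _ ≤ c0 * c i := Nat.mul_le_mul_right _ hle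
  have h2 : (c0 + S) ^ 2 ≤ n ^ 2 := Nat.pow_le_pow_left hn 2
  have hc01 : 1 ≤ c0 := hpos _
  have : S ^ 2 + 2 * ∑ i, (c i) ^ 2 + 1 ≤ n ^ 2 := by nlinarith
  omega
end

section
/- For every n ≥ 1, p(n) = 1 + Σ_{m=1}^{n^2-1} |B_n(m)|, where B_n(m) is the set of weakly decreasing tuples (c_1 ≥ c_2 ≥ ... ≥ c_t ≥ 1) of positive integers with (c_1+...+c_t)^2 + 2(c_1^2+...+c_t^2) = m and (c_1+...+c_t) + c_1 ≤ n, and p(n) is the number of partitions of n. -/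
/-- A weakly decreasing tuple of positive integers, encoded as a list, in the
set Bₙ(m): it represents m as a t-squared partition and b + c₁ ≤ n. -/
def memB (n m : ℕ) (c : List ℕ) : Prop :=
  c ≠ [] ∧ c.Pairwise (· ≥ ·) ∧ (∀ x ∈ c, 0 < x) ∧
    c.sum ^ 2 + 2 * (c.map fun x => x ^ 2).sum = m ∧ c.sum + c.head! ≤ n

private lemma head_max {c : List ℕ} (hs : c.Pairwise (· ≥ ·)) : ∀ b ∈ c, b ≤ c.head! := by
  cases c with
  | nil => intro b hb; simp at hb
  | cons a t =>
    rw [List.pairwise_cons] at hs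
    intro b hb
    rcases List.mem_cons.1 hb with h | h
    · simp [h]
    · simpa using hs.1 b h

/-- The m-value of the tail of the sorted parts of a partition. -/
private def gval (n : ℕ) (p : Nat.Partition n) : ℕ :=
  ((p.parts.sort (· ≥ ·)).tail).sum ^ 2 +
    2 * (((p.parts.sort (· ≥ ·)).tail).map fun x => x ^ 2).sum

private lemma memB_range {n m : ℕ} {c : List ℕ} (h : memB n m c) :
    m ∈ Finset.Icc 1 (n ^ 2 - 1) := by
  obtain ⟨hne, hs, hpos, hm, hbn⟩ := h
  set b := c.sum with hb
  set h1 := c.head! with hh1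
  have hhm : h1 ∈ c := List.head!_mem_self hne
  have hh1pos : 1 ≤ h1 := hpos _ hhm
  have hble : h1 ≤ b := List.single_le_sum (fun x _ => Nat.zero_le x) _ hhm
  have hsq : (c.map fun x => x ^ 2).sum ≤ h1 * b := by
    have h1' : (c.map fun x => x ^ 2).sum ≤ (c.map fun x => h1 * x).sum :=
      List.sum_le_sum (fun i hi => by
        have := head_max hs i hi
        calc i ^ 2 = i * i := sq i
        _ ≤ h1 * i := Nat.mul_le_mul_right i this)
    have h2' : (c.map fun x => h1 * x).sum = h1 * b := by
      rw [show (c.map fun x => h1 * x) = (c.map fun x => h1 * id x) from rfl,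
        List.sum_map_mul_left]
      simp [hb]
    omega
  have hbs : (b + h1) ^ 2 ≤ n ^ 2 := Nat.pow_le_pow_left hbn 2
  have he : (b + h1) ^ 2 = b ^ 2 + 2 * (h1 * b) + h1 ^ 2 := by ring
  have h1sq : 1 ≤ h1 ^ 2 := Nat.one_le_pow _ _ hh1pos
  have hb1 : 1 ≤ b := le_trans hh1pos hble
  have hbsq : 1 ≤ b ^ 2 := Nat.one_le_pow _ _ hb1
  rw [Finset.mem_Icc]
  omega

/-- The bijection between `B n m` and partitions of `n` with at least two parts
whose `gval` is `m`. -/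
private def memBEquiv (n m : ℕ) :
    {c : List ℕ // memB n m c} ≃
      {p : Nat.Partition n // 2 ≤ Multiset.card p.parts ∧ gval n p = m} where
  toFun := fun ⟨c, hne, hs, hpos, hm, hbn⟩ => by
    have hhm : c.head! ∈ c := List.head!_mem_self hne
    have hh1pos : 0 < c.head! := hpos _ hhm
    refine ⟨⟨(n - c.sum) ::ₘ (c : Multiset ℕ), ?_, ?_⟩, ?_, ?_⟩
    · intro i hi
      rcases Multiset.mem_cons.1 hi with h | h
      · omega
      · exact hpos _ (by simpa using h)
    · simp only [Multiset.sum_cons, Multiset.sum_coe]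
      omega
    · simp only [Multiset.card_cons, Multiset.coe_card]
      have : c.length ≠ 0 := fun h => hne (List.length_eq_zero_iff.1 h)
      omega
    · have hsortd : (((n - c.sum) ::ₘ (c : Multiset ℕ)).sort (· ≥ ·))
          = (n - c.sum) :: c := by
        refine (fun hp h1 h2 => List.Perm.eq_of_pairwise' (r := (· ≥ ·)) h1 h2 hp) ?_ ?_ ?_
        · have := Multiset.sort_eq (α := ℕ) ((n - c.sum) ::ₘ (c : Multiset ℕ)) (· ≥ ·)
          exact Multiset.coe_eq_coe.1 (by rw [this]; rfl)
        · exact Multiset.pairwise_sort _ _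
        · rw [List.pairwise_cons]
          refine ⟨fun b hb => ?_, hs⟩
          have := head_max hs b hb
          omega
      simp only [gval, hsortd, List.tail_cons]
      exact hm
  invFun := fun ⟨p, hcard, hg⟩ => by
    set l := p.parts.sort (· ≥ ·) with hl
    have hlp : (l : Multiset ℕ) = p.parts := Multiset.sort_eq _ _
    have hlen : l.length = Multiset.card p.parts := by
      rw [← hlp]; simp
    have hlne : l ≠ [] := by
      intro h; rw [h] at hlen; simp at hlen; omega
    have hlsort : l.Pairwise (· ≥ ·) := Multiset.pairwise_sort _ _
    have htne : l.tail ≠ [] := by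
      intro h
      have := @List.length_tail _ l
      rw [h] at this; simp at this; omega
    have hmem : ∀ x ∈ l, 0 < x := fun x hx => p.parts_pos (by rw [← hlp]; simpa using hx)
    have hsum : l.sum = n := by
      have := p.parts_sum
      rw [← hlp] at this; simpa using this
    have hcons : l.head! :: l.tail = l := List.cons_head!_tail hlne
    have hsum' : l.head! + l.tail.sum = n := by
      rw [← hsum, ← hcons]; simp
    refine ⟨l.tail, htne, hlsort.tail, fun x hx => hmem x (List.mem_of_mem_tail hx), hg, ?_⟩
    have h2 : l.tail.head! ∈ l.tail := List.head!_mem_self htne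
    have h3 : l.tail.head! ≤ l.head! := by
      rw [← hcons] at hlsort
      rw [List.pairwise_cons] at hlsort
      exact hlsort.1 _ h2
    omega
  left_inv := by
    rintro ⟨c, hne, hs, hpos, hm, hbn⟩
    have hhm : c.head! ∈ c := List.head!_mem_self hne
    have hh1pos : 0 < c.head! := hpos _ hhm
    apply Subtype.ext
    have hsortd : (((n - c.sum) ::ₘ (c : Multiset ℕ)).sort (· ≥ ·))
        = (n - c.sum) :: c := by
      refine (fun hp h1 h2 => List.Perm.eq_of_pairwise' (r := (· ≥ ·)) h1 h2 hp) ?_ ?_ ?_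
      · have := Multiset.sort_eq (α := ℕ) ((n - c.sum) ::ₘ (c : Multiset ℕ)) (· ≥ ·)
        exact Multiset.coe_eq_coe.1 (by rw [this]; rfl)
      · exact Multiset.pairwise_sort _ _
      · rw [List.pairwise_cons]
        refine ⟨fun b hb => ?_, hs⟩
        have := head_max hs b hb
        omega
    show (Multiset.sort ((n - c.sum) ::ₘ (c : Multiset ℕ)) (· ≥ ·)).tail = c
    rw [hsortd, List.tail_cons]
  right_inv := by
    rintro ⟨p, hcard, hg⟩
    apply Subtype.ext
    apply Nat.Partition.ext
    simp only
    set l := p.parts.sort (· ≥ ·) with hl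
    have hlp : (l : Multiset ℕ) = p.parts := Multiset.sort_eq _ _
    have hlen : l.length = Multiset.card p.parts := by rw [← hlp]; simp
    have hlne : l ≠ [] := by intro h; rw [h] at hlen; simp at hlen; omega
    have hsum : l.sum = n := by
      have := p.parts_sum
      rw [← hlp] at this; simpa using this
    have hcons : l.head! :: l.tail = l := List.cons_head!_tail hlne
    have hsum' : l.head! + l.tail.sum = n := by rw [← hsum, ← hcons]; simp
    have hhd : n - l.tail.sum = l.head! := by omega
    rw [hhd, ← hlp, ← hcons]
    rfl

/-- The unique partition of `n ≥ 1` with at most one part. -/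
private def singlePart (n : ℕ) (hn : 1 ≤ n) : Nat.Partition n :=
  ⟨{n}, fun hi => by simp at hi; omega, by simp⟩

/-- Main Theorem: p(n) = 1 + Σ_{m=1}^{n²-1} |Bₙ(m)|. -/
theorem stmt16 (n : ℕ) (hn : 1 ≤ n) :
    Fintype.card (Nat.Partition n) =
      1 + ∑ m ∈ Finset.Icc 1 (n ^ 2 - 1), Nat.card {c : List ℕ // memB n m c} := by
  classical
  -- card of each B n m as a filter on partitions
  have hcardB : ∀ m, Nat.card {c : List ℕ // memB n m c} =
      ((Finset.univ.filter
        (fun p : Nat.Partition n => 2 ≤ Multiset.card p.parts)).filter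
        (fun p => gval n p = m)).card := by
    intro m
    rw [Nat.card_congr (memBEquiv n m), Nat.card_eq_fintype_card,
      Fintype.card_subtype, Finset.filter_filter]
  -- the big set F
  set F : Finset (Nat.Partition n) :=
    Finset.univ.filter (fun p : Nat.Partition n => 2 ≤ Multiset.card p.parts) with hF
  have hfiber : F.card = ∑ m ∈ Finset.Icc 1 (n ^ 2 - 1),
      (F.filter (fun p => gval n p = m)).card := by
    apply Finset.card_eq_sum_card_fiberwise
    intro p hp
    rw [hF, Finset.mem_coe, Finset.mem_filter] at hp
    -- show gval n p ∈ Icc: the tail list satisfies memB n (gval n p)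
    have := ((memBEquiv n (gval n p)).symm ⟨p, hp.2, rfl⟩).2
    exact memB_range this
  have hsplit : (Finset.univ.filter
      (fun p : Nat.Partition n => ¬ 2 ≤ Multiset.card p.parts)).card + F.card =
      Fintype.card (Nat.Partition n) := by
    rw [hF, add_comm, Finset.card_filter_add_card_filter_not
      (p := fun p : Nat.Partition n => 2 ≤ Multiset.card p.parts), Finset.card_univ]
  have hone : (Finset.univ.filter
      (fun p : Nat.Partition n => ¬ 2 ≤ Multiset.card p.parts)).card = 1 := by
    rw [Finset.card_eq_one]
    refine ⟨singlePart n hn, ?_⟩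
    ext p
    simp only [Finset.mem_filter, Finset.mem_univ, true_and, Finset.mem_singleton]
    constructor
    · intro hp
      have hcard : Multiset.card p.parts ≤ 1 := by omega
      have hne : Multiset.card p.parts ≠ 0 := by
        intro h
        have := p.parts_sum
        rw [Multiset.card_eq_zero.1 h] at this
        simp at this; omega
      have hc1 : Multiset.card p.parts = 1 := by omega
      obtain ⟨a, ha⟩ := Multiset.card_eq_one.1 hc1
      have hsum := p.parts_sum
      rw [ha] at hsum
      simp at hsum
      apply Nat.Partition.ext
      rw [ha, hsum]
      rfl
    · intro hp
      rw [hp]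
      simp [singlePart]
  rw [← hsplit, hone, hfiber]
  exact congrArg (1 + ·) (Finset.sum_congr rfl fun m _ => (hcardB m).symm)
end

section
/- The number of partitions of n equals 1 plus the number of weakly decreasing tuples (c_1 ≥ c_2 ≥ ... ≥ c_t ≥ 1) of positive integers (over all t ≥ 1) satisfying 2c_1 + c_2 + ... + c_t ≤ n. -/
private def S (n : ℕ) : Type := {c : List ℕ // c ≠ [] ∧ c.Pairwise (· ≥ ·) ∧
    (∀ x ∈ c, 0 < x) ∧ c.head! + c.sum ≤ n}

/-- The unique partition of `n` into at most one part. -/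
private def trivPart (n : ℕ) : Nat.Partition n where
  parts := if n = 0 then 0 else {n}
  parts_pos := by
    intro i hi
    split_ifs at hi with hn
    · simp at hi
    · simp at hi; omega
  parts_sum := by split_ifs with hn <;> simp [hn]

/-- The partition associated to a list in `S n`. -/
private def listPart (n : ℕ) (c : S n) : Nat.Partition n where
  parts := (n - c.1.sum) ::ₘ (↑c.1 : Multiset ℕ)
  parts_pos := by
    obtain ⟨c, hne, hsort, hpos, hsum⟩ := c
    intro i hi
    rcases Multiset.mem_cons.1 hi with h | h
    · have hm : c.head! ∈ c := List.head!_mem_self hne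
      have := hpos _ hm
      simp only at h hsum ⊢
      omega
    · exact hpos _ (by simpa using h)
  parts_sum := by
    obtain ⟨c, hne, hsort, hpos, hsum⟩ := c
    simp only [Multiset.sum_cons, Multiset.sum_coe]
    omega

private theorem sort_listPart (n : ℕ) (c : S n) :
    Multiset.sort (listPart n c).parts (· ≥ ·) = (n - c.1.sum) :: c.1 := by
  obtain ⟨c, hne, hsort, hpos, hsum⟩ := c
  have hhead : c.head! ∈ c := List.head!_mem_self hne
  have hsorted : ((n - c.sum) :: c).Pairwise (· ≥ ·) := by
    refine List.pairwise_cons.2 ⟨?_, hsort⟩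
    intro b hb
    have hble : c.head! ≥ b := by
      rcases c with _ | ⟨a, t⟩
      · simp at hb
      · simp only [List.head!_cons]
        rcases List.mem_cons.1 hb with h | h
        · omega
        · exact (List.pairwise_cons.1 hsort).1 _ h
    have := hpos _ hhead
    omega
  have hperm : List.Perm
      (Multiset.sort ((n - c.sum) ::ₘ (↑c : Multiset ℕ)) (· ≥ ·))
      ((n - c.sum) :: c) := by
    rw [← Multiset.coe_eq_coe, Multiset.sort_eq]
    rfl
  exact List.Perm.eq_of_pairwise' (Multiset.pairwise_sort _ _) hsorted hperm

private theorem tail_le_aux (n : ℕ) (l : List ℕ) (hs : l.Pairwise (· ≥ ·))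
    (hsum : l.sum = n) (h : l.tail ≠ []) : l.tail.head! + l.tail.sum ≤ n := by
  rcases l with _ | ⟨a, t⟩
  · simp at h
  · simp only [List.tail_cons] at h ⊢
    have hmem : t.head! ∈ t := List.head!_mem_self h
    have hle : a ≥ t.head! := (List.pairwise_cons.1 hs).1 _ hmem
    simp only [List.sum_cons] at hsum
    omega

private def partEquiv (n : ℕ) : Nat.Partition n ≃ Option (S n) where
  toFun p :=
    if h : (Multiset.sort p.parts (· ≥ ·)).tail = [] then none
    else some ⟨(Multiset.sort p.parts (· ≥ ·)).tail, by
      refine ⟨h, (Multiset.pairwise_sort _ _).tail, ?_, ?_⟩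
      · intro x hx
        exact p.parts_pos ((Multiset.mem_sort _).1 (List.mem_of_mem_tail hx))
      · exact tail_le_aux n _ (Multiset.pairwise_sort _ _)
          (by rw [← Multiset.sum_coe, Multiset.sort_eq, p.parts_sum]) h⟩
  invFun o := o.elim (trivPart n) (listPart n)
  left_inv p := by
    have hsum : (Multiset.sort p.parts (· ≥ ·)).sum = n := by
      rw [← Multiset.sum_coe, Multiset.sort_eq, p.parts_sum]
    have hparts : ↑(Multiset.sort p.parts (· ≥ ·)) = p.parts :=
      Multiset.sort_eq _ _
    have hpos := @p.parts_pos
    dsimp only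
    split_ifs with h
    · replace h : (Multiset.sort p.parts (· ≥ ·)).tail = [] := h
      ext1
      show (trivPart n).parts = p.parts
      show (if n = 0 then 0 else {n}) = p.parts
      generalize hl : Multiset.sort p.parts (· ≥ ·) = l at h hsum hparts
      rcases l with _ | ⟨a, t⟩
      · simp only [List.sum_nil] at hsum
        rw [if_pos hsum.symm, ← hparts]
        rfl
      · simp only [List.tail_cons] at h
        subst h
        simp only [List.sum_cons, List.sum_nil, add_zero] at hsum
        have ha : a ≠ 0 := by
          have := hpos (show a ∈ p.parts by rw [← hparts]; simp)
          omega
        subst hsum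
        rw [if_neg ha, ← hparts]
        rfl
    · replace h : (Multiset.sort p.parts (· ≥ ·)).tail ≠ [] := h
      ext1
      show (listPart n _).parts = p.parts
      unfold listPart
      dsimp only
      generalize hl : Multiset.sort p.parts (· ≥ ·) = l at h hsum hparts ⊢
      rcases l with _ | ⟨a, t⟩
      · simp at h
      · simp only [List.sum_cons] at hsum
        simp only [List.tail_cons]
        rw [show n - t.sum = a by omega, ← hparts]
        rfl
  right_inv o := by
    rcases o with _ | ⟨c, hc⟩
    · simp only [Option.elim]
      have : (Multiset.sort (trivPart n).parts (· ≥ ·)).tail = [] := by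
        simp only [trivPart]
        split_ifs with hn
        · simp
        · have : Multiset.sort ({n} : Multiset ℕ) (· ≥ ·) = [n] :=
            Multiset.sort_singleton _ _
          simp [this]
      exact dif_pos this
    · simp only [Option.elim]
      have hs := sort_listPart n ⟨c, hc⟩
      simp only at hs
      refine (dif_neg ?_).trans ?_
      · simp [hs, hc.1]
      · congr 1
        apply Subtype.ext
        simp [hs]

/-- The number of partitions of n equals 1 plus the number of weakly decreasing
tuples c₁ ≥ ⋯ ≥ c_t ≥ 1 of positive integers with 2c₁ + c₂ + ⋯ + c_t ≤ n. -/
theorem stmt17 (n : ℕ) :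
    Fintype.card (Nat.Partition n) =
      1 + Nat.card {c : List ℕ // c ≠ [] ∧ c.Pairwise (· ≥ ·) ∧
        (∀ x ∈ c, 0 < x) ∧ c.head! + c.sum ≤ n} := by
  have e := partEquiv n
  haveI : Finite (Option (S n)) := Finite.of_equiv _ e
  haveI : Finite (S n) := Finite.of_injective some (Option.some_injective _)
  haveI : Fintype (S n) := Fintype.ofFinite _
  show Fintype.card (Nat.Partition n) = 1 + Nat.card (S n)
  rw [Fintype.card_congr e, Fintype.card_option, Nat.card_eq_fintype_card]
  omega
end

section
/- For each m that is the value of the Path Procedure, the frequency f(m) — the number of matrices M in M_0 with P(M) = m — is finite, being bounded above by the number of partitions of m into distinct odd parts. -/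
namespace Stmt18Aux

/-- each value `x` repeated `x` times -/
def mu (c : List ℕ) : List ℕ := c.flatMap fun x => List.replicate x x

lemma mu_length (c : List ℕ) : (mu c).length = c.sum := by
  induction c with
  | nil => simp [mu]
  | cons a t ih => simp [mu, List.flatMap_cons] at ih ⊢

lemma mu_sum (c : List ℕ) : (mu c).sum = (c.map fun x => x ^ 2).sum := by
  induction c with
  | nil => simp [mu]
  | cons a t ih => simp [mu, List.flatMap_cons, List.sum_replicate] at ih ⊢
                   rw [ih]; ring_nf

lemma mu_sorted {c : List ℕ} (h : c.Pairwise (· ≥ ·)) : (mu c).Pairwise (· ≥ ·) := by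
  rw [mu, List.pairwise_flatMap]
  refine ⟨fun a _ => ?_, h.imp ?_⟩
  · rw [List.pairwise_replicate]; exact Or.inr le_rfl
  · intro a b hab x hx y hy
    rw [List.eq_of_mem_replicate hx, List.eq_of_mem_replicate hy]; exact hab

lemma mu_inj : ∀ c₁ c₂ : List ℕ, (∀ x ∈ c₁, 0 < x) → (∀ x ∈ c₂, 0 < x) →
    mu c₁ = mu c₂ → c₁ = c₂ := by
  intro c₁
  induction c₁ with
  | nil =>
    intro c₂ _ h2 h
    cases c₂ with
    | nil => rfl
    | cons b t₂ =>
      exfalso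
      have hb := h2 b (by simp)
      obtain ⟨b', rfl⟩ := Nat.exists_eq_succ_of_ne_zero hb.ne'
      simp [mu, List.flatMap_cons, List.replicate_succ] at h
  | cons a t₁ ih =>
    intro c₂ h1 h2 h
    cases c₂ with
    | nil =>
      exfalso
      have ha := h1 a (by simp)
      obtain ⟨a', rfl⟩ := Nat.exists_eq_succ_of_ne_zero ha.ne'
      simp [mu, List.flatMap_cons, List.replicate_succ] at h
    | cons b t₂ =>
      have ha := h1 a (by simp)
      have hb := h2 b (by simp)
      have hab : a = b := by
        obtain ⟨a', rfl⟩ := Nat.exists_eq_succ_of_ne_zero ha.ne'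
        obtain ⟨b', rfl⟩ := Nat.exists_eq_succ_of_ne_zero hb.ne'
        have := congrArg (fun l => l.getD 0 0) h
        simpa [mu, List.flatMap_cons, List.replicate_succ] using this
      subst hab
      have htail : mu t₁ = mu t₂ := by
        have h' : List.replicate a a ++ mu t₁ = List.replicate a a ++ mu t₂ := by
          simpa [mu, List.flatMap_cons] using h
        exact List.append_cancel_left h'
      rw [ih t₂ (fun x hx => h1 x (List.mem_cons_of_mem _ hx))
        (fun x hx => h2 x (List.mem_cons_of_mem _ hx)) htail]

lemma sum_getD (l : List ℕ) : ∑ j ∈ Finset.range l.length, l.getD j 0 = l.sum := by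
  induction l with
  | nil => simp
  | cons a t ih =>
    rw [List.length_cons, Finset.sum_range_succ']
    simp only [List.getD_cons_succ, List.getD_cons_zero, List.sum_cons]
    rw [ih]; omega

lemma mu_anti {c : List ℕ} (h : c.Pairwise (· ≥ ·)) {j k : ℕ} (hjk : j < k)
    (hk : k < (mu c).length) : (mu c).getD k 0 ≤ (mu c).getD j 0 := by
  have hj : j < (mu c).length := lt_trans hjk hk
  rw [List.getD_eq_getElem _ _ hk, List.getD_eq_getElem _ _ hj]
  exact List.pairwise_iff_getElem.mp (mu_sorted h) j k hj hk hjk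

/-- the parts of the associated partition into distinct odd parts -/
def pt (c : List ℕ) (j : ℕ) : ℕ := 2 * ((c.sum - 1 - j) + (mu c).getD j 0) + 1

def g (c : List ℕ) : Multiset ℕ := ((List.range c.sum).map (pt c) : List ℕ)

lemma g_sum (c : List ℕ) : (g c).sum = c.sum ^ 2 + 2 * (c.map fun x => x ^ 2).sum := by
  have : (g c).sum = ∑ j ∈ Finset.range c.sum, pt c j := rfl
  rw [this]
  have h1 : ∑ j ∈ Finset.range c.sum, pt c j
      = 2 * (∑ j ∈ Finset.range c.sum, (c.sum - 1 - j))
        + 2 * (∑ j ∈ Finset.range c.sum, (mu c).getD j 0) + c.sum := by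
    simp only [pt]
    rw [Finset.sum_add_distrib, Finset.sum_const, ← Finset.mul_sum, Finset.sum_add_distrib,
      mul_add]
    simp [Finset.card_range]
  rw [h1]
  have h2 : ∑ j ∈ Finset.range c.sum, (c.sum - 1 - j) = ∑ j ∈ Finset.range c.sum, j :=
    Finset.sum_range_reflect (fun j => j) c.sum
  have h3 : (∑ j ∈ Finset.range c.sum, j) * 2 = c.sum * (c.sum - 1) :=
    Finset.sum_range_id_mul_two c.sum
  have h4 : ∑ j ∈ Finset.range c.sum, (mu c).getD j 0 = (c.map fun x => x ^ 2).sum := by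
    rw [← mu_length c, sum_getD, mu_sum]
  rw [h2, h4]
  have h5 : ∀ n : ℕ, 2 * (∑ j ∈ Finset.range n, j) + n = n ^ 2 := by
    intro n
    have h3' := Finset.sum_range_id_mul_two n
    cases n with
    | zero => simp
    | succ k => rw [mul_comm 2, h3', Nat.succ_sub_one]; ring
  have := h5 c.sum
  omega

lemma g_sorted {c : List ℕ} (h : c.Pairwise (· ≥ ·)) :
    ((List.range c.sum).map (pt c)).Pairwise (· > ·) := by
  rw [List.pairwise_iff_getElem]
  intro i j hi hj hij
  simp only [List.length_map, List.length_range] at hi hj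
  simp only [List.getElem_map, List.getElem_range]
  have hmono : (mu c).getD j 0 ≤ (mu c).getD i 0 :=
    mu_anti h hij (by rw [mu_length]; exact hj)
  simp only [pt]
  omega

lemma g_nodup {c : List ℕ} (h : c.Pairwise (· ≥ ·)) : (g c).Nodup := by
  rw [g, Multiset.coe_nodup]
  exact (g_sorted h).nodup

lemma g_odd (c : List ℕ) : ∀ x ∈ g c, Odd x := by
  intro x hx
  rw [g, Multiset.mem_coe, List.mem_map] at hx
  obtain ⟨j, _, rfl⟩ := hx
  exact ⟨_, by rw [pt]⟩

lemma g_pos (c : List ℕ) : ∀ x ∈ g c, 0 < x := by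
  intro x hx
  rw [g, Multiset.mem_coe, List.mem_map] at hx
  obtain ⟨j, _, rfl⟩ := hx
  simp [pt]

lemma g_inj : ∀ c₁ c₂ : List ℕ, c₁.Pairwise (· ≥ ·) → c₂.Pairwise (· ≥ ·) →
    (∀ x ∈ c₁, 0 < x) → (∀ x ∈ c₂, 0 < x) → g c₁ = g c₂ → c₁ = c₂ := by
  intro c₁ c₂ hs1 hs2 hp1 hp2 h
  have hcard : c₁.sum = c₂.sum := by
    have := congrArg Multiset.card h
    simpa [g] using this
  haveI : IsAntisymm ℕ (· > ·) := ⟨fun a b h h' => absurd h' (by omega)⟩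
  have hlist : (List.range c₁.sum).map (pt c₁) = (List.range c₂.sum).map (pt c₂) := by
    refine List.Perm.eq_of_pairwise' (g_sorted hs1) (g_sorted hs2) ?_
    rwa [g, g, Multiset.coe_eq_coe] at h
  have hpt : ∀ j < c₁.sum, pt c₁ j = pt c₂ j := by
    intro j hj
    have hj' : j < ((List.range c₁.sum).map (pt c₁)).length := by simpa using hj
    have hj'' : j < ((List.range c₂.sum).map (pt c₂)).length := by
      simpa [← hcard] using hj
    have := List.getElem_of_eq hlist (by simpa using hj : j < ((List.range c₁.sum).map (pt c₁)).length)
    simpa using this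
  have hmu : mu c₁ = mu c₂ := by
    apply List.ext_getElem (by rw [mu_length, mu_length, hcard])
    intro j hj1 hj2
    have hjs : j < c₁.sum := by rwa [mu_length] at hj1
    have h1 := hpt j hjs
    rw [pt, pt, hcard] at h1
    have e1 : (mu c₁).getD j 0 = (mu c₁)[j] := List.getD_eq_getElem _ _ hj1
    have e2 : (mu c₂).getD j 0 = (mu c₂)[j] := List.getD_eq_getElem _ _ hj2
    omega
  exact mu_inj c₁ c₂ hp1 hp2 hmu

end Stmt18Aux

/-- The frequency f(m) — the number of representations of m as a t-squared
partition, i.e. of matrices in M₀ with P(M) = m — is finite, bounded above by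
the number of partitions of m into distinct odd parts. -/
theorem stmt18 (m : ℕ) :
    {c : List ℕ | c ≠ [] ∧ c.Pairwise (· ≥ ·) ∧ (∀ x ∈ c, 0 < x) ∧
        c.sum ^ 2 + 2 * (c.map fun x => x ^ 2).sum = m}.Finite ∧
      {c : List ℕ | c ≠ [] ∧ c.Pairwise (· ≥ ·) ∧ (∀ x ∈ c, 0 < x) ∧
        c.sum ^ 2 + 2 * (c.map fun x => x ^ 2).sum = m}.ncard ≤
      Nat.card {p : Nat.Partition m // p.parts.Nodup ∧ ∀ x ∈ p.parts, Odd x} := by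
  classical
  set S : Set (List ℕ) := {c : List ℕ | c ≠ [] ∧ c.Pairwise (· ≥ ·) ∧ (∀ x ∈ c, 0 < x) ∧
        c.sum ^ 2 + 2 * (c.map fun x => x ^ 2).sum = m} with hS
  set T : Set (Nat.Partition m) :=
    {p : Nat.Partition m | p.parts.Nodup ∧ ∀ x ∈ p.parts, Odd x} with hT
  have hinj : Set.InjOn Stmt18Aux.g S := by
    intro c₁ h₁ c₂ h₂ h
    exact Stmt18Aux.g_inj c₁ c₂ h₁.2.1 h₂.2.1 h₁.2.2.1 h₂.2.2.1 h
  have hsub : Stmt18Aux.g '' S ⊆ Nat.Partition.parts '' T := by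
    rintro q ⟨c, hc, rfl⟩
    refine ⟨⟨Stmt18Aux.g c, fun hi => Stmt18Aux.g_pos c _ hi, ?_⟩,
      ⟨Stmt18Aux.g_nodup hc.2.1, Stmt18Aux.g_odd c⟩, rfl⟩
    rw [Stmt18Aux.g_sum]; exact hc.2.2.2
  have hTfin : T.Finite := Set.toFinite T
  have himg : (Stmt18Aux.g '' S).Finite := (hTfin.image _).subset hsub
  have hSfin : S.Finite := Set.Finite.of_finite_image himg hinj
  refine ⟨hSfin, ?_⟩
  have hpinj : Set.InjOn Nat.Partition.parts T := fun p _ q _ h => Nat.Partition.ext h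
  calc S.ncard = (Stmt18Aux.g '' S).ncard := (Set.ncard_image_of_injOn hinj).symm
    _ ≤ (Nat.Partition.parts '' T).ncard := Set.ncard_le_ncard hsub (hTfin.image _)
    _ = T.ncard := Set.ncard_image_of_injOn hpinj
    _ = Nat.card {p : Nat.Partition m // p.parts.Nodup ∧ ∀ x ∈ p.parts, Odd x} :=
        (Nat.card_coe_set_eq T).symm
end
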